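/- Let G be a group acting on a G-graded ring B via h·(χ_g ⋉̂ c) = χ_{hg} ⋉̂ c on the crossed product G ⋉̂ B. Then there is an isomorphism of G-graded rings (G ⋉̂ B) ⋊ G ≅ M_G(B), where M_G(B) is the ring of finitely supported G×G matrices over B, graded by declaring ε_{s,t} ⊗ b homogeneous of degree s|b|t⁻¹ for homogeneous b ∈ B. Dually, for a ring A with G-action, there is an isomorphism of G-rings G ⋉̂ (A ⋊ G) ≅ M_G(A), where G acts on M_G(A) by (g·f)(x,y) = g·f(g⁻¹x, g⁻¹y). -/

import Mathlib

set_option maxHeartbeats 2000000 in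
/-- (a) For a `G`-graded ring `B` with crossed product `S = G ⋉̂ B`
(carrying the `G`-action `h·(χ_g ⋉ c) = χ_{hg} ⋉ c`), there is an isomorphism of
`G`-graded rings `(G ⋉̂ B) ⋊ G ≅ M_G(B)`, where `M_G(B)` is the ring of finitely
supported `G×G` matrices over `B`, graded by declaring `ε_{s,t} ⊗ b` homogeneous of
degree `s·|b|·t⁻¹` for homogeneous `b`; the isomorphism sends `(χ_h ⋉ b) ⋊ g` to
`ε_{h, g⁻¹hd} ⊗ b` for `b ∈ B_d`.
(b) Dually, for a ring `A` with a `G`-action `α`, there is a `G`-equivariant ring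
isomorphism `G ⋉̂ (A ⋊ G) ≅ M_G(A)` (with action `(g·f)(x,y) = g·f(g⁻¹x, g⁻¹y)` on
matrices), sending `χ_s ⋉ (a ⋊ g)` to `ε_{s,sg} ⊗ α_s(a)`.
All rings in sight are presented by additive isomorphisms (`jS`, `jC`, `jMB`, `jT`,
`jMA`) from the corresponding groups of finitely supported functions, subject to the
multiplication rules of the crossed products `G ⋉̂ -`, `- ⋊ G` and of matrix rings. -/
theorem stmt_11 {G : Type} [Group G] [DecidableEq G]
    -- part (a): the graded case
    {B S C MatB : Type} [Ring B] [NonUnitalRing S] [NonUnitalRing C] [NonUnitalRing MatB]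
    (𝒷 : G → AddSubgroup B) [DirectSum.Decomposition 𝒷]
    (hBmul : ∀ (g h : G) (a b : B), a ∈ 𝒷 g → b ∈ 𝒷 h → a * b ∈ 𝒷 (g * h))
    (jS : (G →₀ B) ≃+ S)
    (hjS : ∀ (g h d : G) (b c : B), b ∈ 𝒷 d →
      jS (Finsupp.single g b) * jS (Finsupp.single h c) =
        if h = g * d then jS (Finsupp.single g (b * c)) else 0)
    (αS : G →* RingAut S)
    (hαS : ∀ (g h : G) (b : B),
      αS g (jS (Finsupp.single h b)) = jS (Finsupp.single (g * h) b))
    (jC : (G →₀ S) ≃+ C)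
    (hjC : ∀ (g h : G) (x y : S),
      jC (Finsupp.single g x) * jC (Finsupp.single h y) =
        jC (Finsupp.single (g * h) (x * αS g y)))
    (jMB : ((G × G) →₀ B) ≃+ MatB)
    (hjMB : ∀ (p q : G × G) (b c : B),
      jMB (Finsupp.single p b) * jMB (Finsupp.single q c) =
        if p.2 = q.1 then jMB (Finsupp.single (p.1, q.2) (b * c)) else 0)
    -- part (b): the equivariant case
    {A T MatA : Type} [Ring A] [NonUnitalRing T] [NonUnitalRing MatA]
    (α : G →* RingAut A)
    (jT : (G →₀ (G →₀ A)) ≃+ T)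
    (hjT : ∀ (u v g h : G) (a b : A),
      jT (Finsupp.single u (Finsupp.single g a)) *
          jT (Finsupp.single v (Finsupp.single h b)) =
        if v = u * g
        then jT (Finsupp.single u (Finsupp.single (g * h) (a * α g b))) else 0)
    (jMA : ((G × G) →₀ A) ≃+ MatA)
    (hjMA : ∀ (p q : G × G) (a b : A),
      jMA (Finsupp.single p a) * jMA (Finsupp.single q b) =
        if p.2 = q.1 then jMA (Finsupp.single (p.1, q.2) (a * b)) else 0)
    (αT : G →* RingAut T)
    (hαT : ∀ (g u : G) (c : G →₀ A),
      αT g (jT (Finsupp.single u c)) = jT (Finsupp.single (g * u) c))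
    (αM : G →* RingAut MatA)
    (hαM : ∀ (g : G) (p : G × G) (a : A),
      αM g (jMA (Finsupp.single p a)) =
        jMA (Finsupp.single (g * p.1, g * p.2) (α g a))) :
    -- (a) `(G ⋉̂ B) ⋊ G ≅ M_G(B)` as `G`-graded rings
    (∃ e : C ≃+* MatB,
      (∀ (g h d : G) (b : B), b ∈ 𝒷 d →
        e (jC (Finsupp.single g (jS (Finsupp.single h b)))) =
          jMB (Finsupp.single (h, g⁻¹ * h * d) b)) ∧
      (∀ (g : G) (x : C),
        x ∈ AddSubgroup.closure {y : C | ∃ z : S, y = jC (Finsupp.single g z)} ↔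
        e x ∈ AddSubgroup.closure {y : MatB | ∃ (p : G × G) (d : G) (b : B),
          b ∈ 𝒷 d ∧ p.1 * d * p.2⁻¹ = g ∧ y = jMB (Finsupp.single p b)})) ∧
    -- (b) `G ⋉̂ (A ⋊ G) ≅ M_G(A)` as `G`-rings
    (∃ e : T ≃+* MatA,
      (∀ (u g : G) (a : A),
        e (jT (Finsupp.single u (Finsupp.single g a))) =
          jMA (Finsupp.single (u, u * g) (α u a))) ∧
      (∀ (g : G) (x : T), e (αT g x) = αM g (e x))) := by
  constructor
  ·
    classical
    set Fa : (G →₀ (G →₀ B)) →+ ((G × G) →₀ B) :=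
      Finsupp.liftAddHom fun g => Finsupp.liftAddHom fun h =>
        (DirectSum.toAddMonoid fun d =>
            (Finsupp.singleAddHom (h, g⁻¹ * h * d)).comp (𝒷 d).subtype).comp
          (DirectSum.decomposeAddEquiv 𝒷).toAddMonoidHom with hFadef
    set Ga : ((G × G) →₀ B) →+ (G →₀ (G →₀ B)) :=
      Finsupp.liftAddHom fun p =>
        (DirectSum.toAddMonoid fun d =>
            ((Finsupp.singleAddHom (p.1 * d * p.2⁻¹)).comp
              (Finsupp.singleAddHom p.1)).comp (𝒷 d).subtype).comp
          (DirectSum.decomposeAddEquiv 𝒷).toAddMonoidHom with hGadef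
    have hFa : ∀ (g h d : G) (b : B), b ∈ 𝒷 d →
        Fa (Finsupp.single g (Finsupp.single h b)) =
          Finsupp.single (h, g⁻¹ * h * d) b := by
      intro g h d b hb
      rw [hFadef]
      rw [Finsupp.liftAddHom_apply_single, Finsupp.liftAddHom_apply_single,
        AddMonoidHom.comp_apply]
      show (DirectSum.toAddMonoid _) (DirectSum.decomposeAddEquiv 𝒷 b) = _
      rw [DirectSum.decomposeAddEquiv_apply, DirectSum.decompose_of_mem 𝒷 hb,
        DirectSum.toAddMonoid_of]
      rfl
    have hGa : ∀ (p : G × G) (d : G) (b : B), b ∈ 𝒷 d →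
        Ga (Finsupp.single p b) =
          Finsupp.single (p.1 * d * p.2⁻¹) (Finsupp.single p.1 b) := by
      intro p d b hb
      rw [hGadef, Finsupp.liftAddHom_apply_single, AddMonoidHom.comp_apply]
      show (DirectSum.toAddMonoid _) (DirectSum.decomposeAddEquiv 𝒷 b) = _
      rw [DirectSum.decomposeAddEquiv_apply, DirectSum.decompose_of_mem 𝒷 hb,
        DirectSum.toAddMonoid_of]
      rfl
    have hGF : Ga.comp Fa = AddMonoidHom.id _ := by
      apply Finsupp.addHom_ext'; intro g
      apply Finsupp.addHom_ext; intro h b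
      simp only [AddMonoidHom.comp_apply, Finsupp.singleAddHom_apply, AddMonoidHom.id_apply]
      induction b using DirectSum.Decomposition.inductionOn 𝒷 with
      | zero => simp
      | @homogeneous d m =>
        rw [hFa g h d m m.2, hGa _ d m m.2]
        have : (h : G) * d * (g⁻¹ * h * d)⁻¹ = g := by group
        rw [this]
      | add b₁ b₂ h₁ h₂ =>
        rw [Finsupp.single_add, Finsupp.single_add, map_add, map_add, h₁, h₂]
    have hFG : Fa.comp Ga = AddMonoidHom.id _ := by
      apply Finsupp.addHom_ext; intro p b
      simp only [AddMonoidHom.comp_apply, Finsupp.singleAddHom_apply, AddMonoidHom.id_apply]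
      induction b using DirectSum.Decomposition.inductionOn 𝒷 with
      | zero => simp
      | @homogeneous d m =>
        rw [hGa p d m m.2, hFa _ _ d m m.2]
        have : ((p.1 * d * p.2⁻¹)⁻¹ * p.1 * d : G) = p.2 := by group
        rw [this]
      | add b₁ b₂ h₁ h₂ =>
        rw [Finsupp.single_add, map_add, map_add, h₁, h₂, ← Finsupp.single_add]
    let φa : (G →₀ (G →₀ B)) ≃+ ((G × G) →₀ B) :=
      { toFun := Fa, invFun := Ga,
        left_inv := fun x => DFunLike.congr_fun hGF x,
        right_inv := fun x => DFunLike.congr_fun hFG x,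
        map_add' := Fa.map_add }
    let ea : C ≃+ MatB :=
      ((jC.symm.trans (Finsupp.mapRange.addEquiv (jS.symm : S ≃+ (G →₀ B)))).trans φa).trans jMB
    have hea : ∀ (g h d : G) (b : B), b ∈ 𝒷 d →
        ea (jC (Finsupp.single g (jS (Finsupp.single h b)))) =
          jMB (Finsupp.single (h, g⁻¹ * h * d) b) := by
      intro g h d b hb
      show jMB (φa (Finsupp.mapRange.addEquiv (jS.symm : S ≃+ (G →₀ B))
        (jC.symm (jC _)))) = _
      rw [jC.symm_apply_apply]
      rw [show (Finsupp.mapRange.addEquiv (jS.symm : S ≃+ (G →₀ B)))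
          (Finsupp.single g (jS (Finsupp.single h b))) =
          Finsupp.single g (Finsupp.single h b) by
        rw [Finsupp.mapRange.addEquiv_apply]
        rw [Finsupp.mapRange_single]
        rw [jS.symm_apply_apply]]
      show jMB (Fa _) = _
      rw [hFa g h d b hb]
    have ea0 : ∀ (g : G), ea (jC (Finsupp.single g (0 : S))) = 0 := by
      intro g; rw [Finsupp.single_zero, map_zero, map_zero]
    have eaadd : ∀ (g : G) (s₁ s₂ : S),
        ea (jC (Finsupp.single g (s₁ + s₂))) =
          ea (jC (Finsupp.single g s₁)) + ea (jC (Finsupp.single g s₂)) := by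
      intro g s₁ s₂; rw [Finsupp.single_add, map_add, map_add]
    -- multiplicativity
    have hmul : ∀ x y : C, ea (x * y) = ea x * ea y := by
      intro x y
      obtain ⟨f, rfl⟩ : ∃ f, x = jC f := ⟨jC.symm x, (jC.apply_symm_apply x).symm⟩
      obtain ⟨f', rfl⟩ : ∃ f', y = jC f' := ⟨jC.symm y, (jC.apply_symm_apply y).symm⟩
      induction f using Finsupp.induction_linear with
      | zero => simp
      | add f₁ f₂ h₁ h₂ => simp only [map_add, add_mul] at *; rw [h₁, h₂]
      | single g s =>
        obtain ⟨w, rfl⟩ : ∃ w, s = jS w := ⟨jS.symm s, (jS.apply_symm_apply s).symm⟩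
        induction w using Finsupp.induction_linear with
        | zero => simp
        | add w₁ w₂ h₁ h₂ =>
          simp only [map_add, Finsupp.single_add, add_mul] at *; rw [h₁, h₂]
        | single h b =>
          induction b using DirectSum.Decomposition.inductionOn 𝒷 with
          | zero => simp
          | add b₁ b₂ h₁ h₂ =>
            simp only [Finsupp.single_add, map_add, add_mul] at *; rw [h₁, h₂]
          | @homogeneous d m =>
            induction f' using Finsupp.induction_linear with
            | zero => simp
            | add f₁ f₂ h₁ h₂ => simp only [map_add, mul_add] at *; rw [h₁, h₂]
            | single g' s' =>
              obtain ⟨w', rfl⟩ : ∃ w', s' = jS w' :=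
                ⟨jS.symm s', (jS.apply_symm_apply s').symm⟩
              induction w' using Finsupp.induction_linear with
              | zero => simp
              | add w₁ w₂ h₁ h₂ =>
                simp only [map_add, Finsupp.single_add, mul_add] at *; rw [h₁, h₂]
              | single h' c =>
                induction c using DirectSum.Decomposition.inductionOn 𝒷 with
                | zero => simp
                | @homogeneous d' m' =>
                  rw [hjC, hαS, hjS h (g * h') d m (m' : B) m.2,
                    hea g h d (m : B) m.2, hea g' h' d' (m' : B) m'.2, hjMB]
                  simp only []
                  by_cases hc : g * h' = h * d
                  · have hc' : (g⁻¹ * h * d : G) = h' := by rw [mul_assoc, ← hc, inv_mul_cancel_left]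
                    rw [if_pos hc, if_pos hc',
                      hea (g * g') h (d * d') _ (hBmul d d' _ _ m.2 m'.2)]
                    have : ((g * g')⁻¹ * h * (d * d') : G) = g'⁻¹ * h' * d' := by
                      rw [← hc']; group
                    rw [this]
                  · have hc' : ¬ ((g⁻¹ * h * d : G) = h') := by
                      intro hh; exact hc (by rw [← hh]; group)
                    rw [if_neg hc, if_neg hc', Finsupp.single_zero, map_zero, map_zero]
                | add c₁ c₂ h₁ h₂ =>
                  simp only [Finsupp.single_add, map_add, mul_add] at *; rw [h₁, h₂]
    refine ⟨{ ea with map_mul' := hmul }, hea, ?_⟩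
    intro g x
    show x ∈ _ ↔ ea x ∈ _
    set S1 : Set C := {y : C | ∃ z : S, y = jC (Finsupp.single g z)} with hS1
    set S2 : Set MatB := {y : MatB | ∃ (p : G × G) (d : G) (b : B),
      b ∈ 𝒷 d ∧ p.1 * d * p.2⁻¹ = g ∧ y = jMB (Finsupp.single p b)} with hS2
    have himg : AddSubgroup.map ea.toAddMonoidHom (AddSubgroup.closure S1) =
        AddSubgroup.closure S2 := by
      rw [AddMonoidHom.map_closure]
      apply le_antisymm
      · apply AddSubgroup.closure_le _ |>.2
        rintro y ⟨_, ⟨z, rfl⟩, rfl⟩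
        obtain ⟨w, rfl⟩ : ∃ w, z = jS w := ⟨jS.symm z, (jS.apply_symm_apply z).symm⟩
        induction w using Finsupp.induction_linear with
        | zero =>
          show ea (jC (Finsupp.single g (jS 0))) ∈ _
          rw [map_zero, Finsupp.single_zero, map_zero, map_zero]
          exact zero_mem _
        | add w₁ w₂ h₁ h₂ =>
          show ea (jC (Finsupp.single g (jS (w₁ + w₂)))) ∈ _
          rw [map_add, eaadd]
          exact add_mem h₁ h₂
        | single h b =>
          induction b using DirectSum.Decomposition.inductionOn 𝒷 with
          | zero =>
            show ea (jC (Finsupp.single g (jS (Finsupp.single h 0)))) ∈ _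
            rw [Finsupp.single_zero, map_zero, Finsupp.single_zero, map_zero, map_zero]
            exact zero_mem _
          | @homogeneous d m =>
            show ea (jC (Finsupp.single g (jS (Finsupp.single h (m : B))))) ∈ _
            rw [hea g h d (m : B) m.2]
            apply AddSubgroup.subset_closure
            exact ⟨(h, g⁻¹ * h * d), d, (m : B), m.2, by group, rfl⟩
          | add b₁ b₂ h₁ h₂ =>
            show ea (jC (Finsupp.single g (jS (Finsupp.single h (b₁ + b₂))))) ∈ _
            rw [Finsupp.single_add, map_add, eaadd]
            exact add_mem h₁ h₂
      · apply AddSubgroup.closure_le _ |>.2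
        rintro y ⟨p, d, b, hb, hpg, rfl⟩
        apply AddSubgroup.subset_closure
        refine ⟨jC (Finsupp.single g (jS (Finsupp.single p.1 b))), ⟨_, rfl⟩, ?_⟩
        show ea _ = _
        rw [hea g p.1 d b hb]
        congr 2
        rw [← hpg]
        have : p = (p.1, p.2) := rfl
        rw [this]
        congr 1
        · group
    rw [← himg]
    constructor
    · intro hx; exact ⟨x, hx, rfl⟩
    · rintro ⟨x', hx', hxx⟩
      have : x' = x := ea.injective hxx
      rwa [← this]
  ·
    classical
    have hinv1 : ∀ (e : RingAut A) (a : A), e⁻¹ (e a) = a := fun e a => e.symm_apply_apply a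
    have hinv2 : ∀ (e : RingAut A) (a : A), e (e⁻¹ a) = a := fun e a => e.apply_symm_apply a
    have hαinv : ∀ (u : G) (a : A), α u⁻¹ (α u a) = a := fun u a => by
      rw [map_inv]; exact hinv1 _ _
    have hαinv' : ∀ (u : G) (a : A), α u (α u⁻¹ a) = a := fun u a => by
      rw [map_inv]; exact hinv2 _ _
    have hαmul : ∀ (g u : G) (a : A), α (g * u) a = α g (α u a) := fun g u a => by
      rw [map_mul]; rfl
    set Fb : (G →₀ (G →₀ A)) →+ ((G × G) →₀ A) :=
      Finsupp.liftAddHom fun u => Finsupp.liftAddHom fun g =>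
        (Finsupp.singleAddHom (u, u * g)).comp (α u).toAddEquiv.toAddMonoidHom with hFbdef
    set Gb : ((G × G) →₀ A) →+ (G →₀ (G →₀ A)) :=
      Finsupp.liftAddHom fun p =>
        ((Finsupp.singleAddHom p.1).comp (Finsupp.singleAddHom (p.1⁻¹ * p.2))).comp
          (α p.1⁻¹).toAddEquiv.toAddMonoidHom with hGbdef
    have hFb : ∀ (u g : G) (a : A),
        Fb (Finsupp.single u (Finsupp.single g a)) = Finsupp.single (u, u * g) (α u a) := by
      intro u g a
      rw [hFbdef, Finsupp.liftAddHom_apply_single, Finsupp.liftAddHom_apply_single]; rfl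
    have hGb : ∀ (p : G × G) (a : A),
        Gb (Finsupp.single p a) =
          Finsupp.single p.1 (Finsupp.single (p.1⁻¹ * p.2) (α p.1⁻¹ a)) := by
      intro p a
      simp [hGbdef, Finsupp.liftAddHom_apply_single]
    have hGF : Gb.comp Fb = AddMonoidHom.id _ := by
      apply Finsupp.addHom_ext'; intro u
      apply Finsupp.addHom_ext; intro g a
      simp [hFb, hGb, hαinv, hinv1, inv_mul_cancel_left]
    have hFG : Fb.comp Gb = AddMonoidHom.id _ := by
      apply Finsupp.addHom_ext; intro p a
      simp [hFb, hGb, hαinv', hinv2, mul_inv_cancel_left]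
    let φb : (G →₀ (G →₀ A)) ≃+ ((G × G) →₀ A) :=
      { toFun := Fb, invFun := Gb,
        left_inv := fun x => DFunLike.congr_fun hGF x,
        right_inv := fun x => DFunLike.congr_fun hFG x,
        map_add' := Fb.map_add }
    let eb : T ≃+ MatA := (jT.symm.trans φb).trans jMA
    have heb : ∀ (u g : G) (a : A),
        eb (jT (Finsupp.single u (Finsupp.single g a))) =
          jMA (Finsupp.single (u, u * g) (α u a)) := by
      intro u g a
      show jMA (φb (jT.symm (jT _))) = _
      rw [jT.symm_apply_apply]
      show jMA (Fb _) = _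
      rw [hFb]
    have hmul : ∀ x y : T, eb (x * y) = eb x * eb y := by
      intro x y
      obtain ⟨f, rfl⟩ : ∃ f, x = jT f := ⟨jT.symm x, (jT.apply_symm_apply x).symm⟩
      obtain ⟨f', rfl⟩ : ∃ f', y = jT f' := ⟨jT.symm y, (jT.apply_symm_apply y).symm⟩
      induction f using Finsupp.induction_linear with
      | zero => simp
      | add f₁ f₂ h₁ h₂ => simp only [map_add, add_mul] at *; rw [h₁, h₂]
      | single u c =>
        induction c using Finsupp.induction_linear with
        | zero => simp
        | add c₁ c₂ h₁ h₂ =>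
          simp only [Finsupp.single_add, map_add, add_mul] at *; rw [h₁, h₂]
        | single g a =>
          induction f' using Finsupp.induction_linear with
          | zero => simp
          | add f₁ f₂ h₁ h₂ => simp only [map_add, mul_add] at *; rw [h₁, h₂]
          | single v c =>
            induction c using Finsupp.induction_linear with
            | zero => simp
            | add c₁ c₂ h₁ h₂ =>
              simp only [Finsupp.single_add, map_add, mul_add] at *; rw [h₁, h₂]
            | single h b =>
              rw [hjT, heb, heb, hjMA]
              simp only []
              by_cases hc : v = u * g
              · rw [if_pos hc, if_pos hc.symm, heb]
                subst hc
                rw [hαmul, map_mul, mul_assoc]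
              · rw [if_neg hc, if_neg (fun hh => hc hh.symm), map_zero]
    refine ⟨{ eb with map_mul' := hmul }, heb, ?_⟩
    intro g x
    obtain ⟨f, rfl⟩ : ∃ f, x = jT f := ⟨jT.symm x, (jT.apply_symm_apply x).symm⟩
    show eb (αT g (jT f)) = αM g (eb (jT f))
    induction f using Finsupp.induction_linear with
    | zero => simp
    | add f₁ f₂ h₁ h₂ => simp only [map_add] at *; rw [h₁, h₂]
    | single u c =>
      induction c using Finsupp.induction_linear with
      | zero => simp
      | add c₁ c₂ h₁ h₂ =>
        simp only [Finsupp.single_add, map_add] at *; rw [h₁, h₂]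
      | single h a =>
        rw [hαT, heb, heb, hαM, hαmul, mul_assoc]
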